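/- Population-level equivalence of MLE and Min-Max-IRL (Theorem 1, part 1, population level): Let π^E be any Markov policy (the expert). Define the population MLE risk L^MLE(π) := E_{τ∼P^{π^E}}[ −Σ_{t=1}^T log π_t(a_t|s_t) ] (for policies π whose kernels have ν-densities) and the population Min-Max-IRL risk L^IRL(r) := J*(r) − E_{τ∼P^{π^E}}[ Σ_{t=1}^T r_t(s_t,a_t) ]. Then for every bounded measurable reward r, L^MLE(π*_r) = β^{−1} L^IRL(r). In particular, over any reward class R, minimizing L^IRL over R and minimizing L^MLE over the class Π*(R) = {π*_r : r ∈ R} have the same minimizers under the map r ↦ π*_r. -/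

import Mathlib

open MeasureTheory ProbabilityTheory Real
open scoped ENNReal RealInnerProductSpace

noncomputable section

namespace IRL

variable {S A : Type*} [MeasurableSpace S] [MeasurableSpace A]

/-- A reward tuple `(r_t)` of bounded measurable functions. -/
def IsBddReward (r : ℕ → S → A → ℝ) : Prop :=
  ∀ t, Measurable (fun q : S × A => r t q.1 q.2) ∧ ∃ C, ∀ s a, |r t s a| ≤ C

/-- `p` is a family of `ν`-probability densities of a Markov policy. -/
def IsPolicyDensity (ν : Measure A) (p : ℕ → S → A → ℝ) : Prop :=
  (∀ t, Measurable (fun q : S × A => p t q.1 q.2)) ∧ (∀ t s a, 0 ≤ p t s a) ∧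
    (∀ t s, ∫ a, p t s a ∂ν = 1)

/-- the log-densities `log π_t` are bounded (in particular the densities are positive). -/
def HasBddLogDensity (p : ℕ → S → A → ℝ) : Prop :=
  ∀ t, (∀ s a, 0 < p t s a) ∧ ∃ C, ∀ s a, |Real.log (p t s a)| ≤ C

variable (T : ℕ) (P : ℕ → Kernel (S × A) S) (ν : Measure A)

/-- Soft-optimal value function `V*_{t,r}` (backward recursion, `V* t ≡ 0` for `t > T`). -/
def Vstar (β : ℝ) (r : ℕ → S → A → ℝ) (t : ℕ) (s : S) : ℝ :=
  if T < t then 0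
  else β * Real.log (∫ a, Real.exp ((r t s a + ∫ s', Vstar β r (t + 1) s' ∂(P t (s, a))) / β) ∂ν)
termination_by T + 1 - t
decreasing_by omega

/-- Soft-optimal state-action value `Q*_{t,r}`. -/
def Qstar (β : ℝ) (r : ℕ → S → A → ℝ) (t : ℕ) (s : S) (a : A) : ℝ :=
  r t s a + ∫ s', Vstar T P ν β r (t + 1) s' ∂(P t (s, a))

/-- `ν`-density of the soft-optimal policy `π*_r`. -/
def piStar (β : ℝ) (r : ℕ → S → A → ℝ) (t : ℕ) (s : S) (a : A) : ℝ :=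
  Real.exp ((Qstar T P ν β r t s a - Vstar T P ν β r t s) / β)

/-- Value function `V^π_{t,r}` of a policy given by densities `p` (with `β = 0` this is the
unregularized value function `V^{π,0}`). -/
def Vpol (β : ℝ) (p r : ℕ → S → A → ℝ) (t : ℕ) (s : S) : ℝ :=
  if T < t then 0
  else ∫ a,
    (r t s a + (∫ s', Vpol β p r (t + 1) s' ∂(P t (s, a))) - β * Real.log (p t s a)) * p t s a ∂ν
termination_by T + 1 - t
decreasing_by omega

/-- `Q^π_{t,r}` for a policy given by densities `p`. -/
def Qpol (β : ℝ) (p r : ℕ → S → A → ℝ) (t : ℕ) (s : S) (a : A) : ℝ :=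
  r t s a + ∫ s', Vpol T P ν β p r (t + 1) s' ∂(P t (s, a))

/-- Regularized advantage `A^π_{t,r}(s,a) = Q^π - V^π - β log π_t(a|s)`. -/
def Apol (β : ℝ) (p r : ℕ → S → A → ℝ) (t : ℕ) (s : S) (a : A) : ℝ :=
  Qpol T P ν β p r t s a - Vpol T P ν β p r t s - β * Real.log (p t s a)

variable (P0 : Measure S)

/-- Optimal value `J*(r) = ∫ V*_{1,r} dP₀`. -/
def Jstar (β : ℝ) (r : ℕ → S → A → ℝ) : ℝ := ∫ s, Vstar T P ν β r 1 s ∂P0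

/-- Expected (regularized) return `J(r,π)` of a density policy. -/
def Jpol (β : ℝ) (p r : ℕ → S → A → ℝ) : ℝ := ∫ s, Vpol T P ν β p r 1 s ∂P0

/-- Iterated expectation, from time `t` in state `s`, of a trajectory functional `g` under a
(kernel) Markov policy `π`; coordinates of the trajectory outside `{1,…,T}` are irrelevant
junk values. -/
def polExp [Nonempty S] [Nonempty A] (pol : ℕ → Kernel S A) (g : (ℕ → S × A) → ℝ) (t : ℕ)
    (s : S) : ℝ :=
  if T < t then g (fun _ => (Classical.arbitrary S, Classical.arbitrary A))
  else ∫ a, ∫ s', polExp pol (fun τ => g (Function.update τ t (s, a))) (t + 1) s' ∂(P t (s, a))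
    ∂(pol t s)
termination_by T + 1 - t
decreasing_by omega

/-- `μ` is the trajectory law `P^π` of the Markov policy `π` (with initial distribution `P₀`),
characterized through integrals of all bounded measurable trajectory functionals. -/
def IsTrajLaw [Nonempty S] [Nonempty A] (pol : ℕ → Kernel S A) (μ : Measure (ℕ → S × A)) : Prop :=
  IsProbabilityMeasure μ ∧
    ∀ g : (ℕ → S × A) → ℝ, Measurable g → (∃ C, ∀ τ, |g τ| ≤ C) →
      ∫ τ, g τ ∂μ = ∫ s, polExp T P pol g 1 s ∂P0

/-- The kernel `s ↦ p t s ⬝ ν` of a policy given by densities. -/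
def densKernel [IsFiniteMeasure ν] (p : ℕ → S → A → ℝ) (t : ℕ) : Kernel S A :=
  Kernel.withDensity (Kernel.const S ν) fun s a => ENNReal.ofReal (p t s a)

open Classical in
/-- Kullback–Leibler divergence `∫ log (dμ/dμ') dμ` if `μ ≪ μ'` (`∞` otherwise). -/
def KL {X : Type*} [MeasurableSpace X] (μ μ' : Measure X) : ℝ≥0∞ :=
  if μ ≪ μ' ∧ Integrable (fun x => Real.log (μ.rnDeriv μ' x).toReal) μ then
    ENNReal.ofReal (∫ x, Real.log (μ.rnDeriv μ' x).toReal ∂μ)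
  else ⊤

/-- Squared Hellinger distance, computed with the dominating measure `μ + μ'`. -/
def sqHellinger {X : Type*} [MeasurableSpace X] (μ μ' : Measure X) : ℝ :=
  ∫ x, (Real.sqrt ((μ.rnDeriv (μ + μ') x).toReal)
      - Real.sqrt ((μ'.rnDeriv (μ + μ') x).toReal)) ^ 2 ∂(μ + μ')

/-- Second directional derivative. -/
def D2 {E : Type*} [NormedAddCommGroup E] [NormedSpace ℝ E] (F : E → ℝ) (θ ξ ζ : E) : ℝ :=
  fderiv ℝ (fun x => fderiv ℝ F x ζ) θ ξ

/-- Third directional derivative. -/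
def D3 {E : Type*} [NormedAddCommGroup E] [NormedSpace ℝ E] (F : E → ℝ) (θ ξ ζ ω : E) : ℝ :=
  fderiv ℝ (fun x => D2 F x ζ ω) θ ξ


section AuxProofs

variable [Nonempty S] [Nonempty A]

theorem integrable_of_bdd' {X : Type*} [MeasurableSpace X] {μ : Measure X} [IsFiniteMeasure μ]
    {f : X → ℝ} (hf : Measurable f) {C : ℝ} (h : ∀ x, |f x| ≤ C) : Integrable f μ :=
  ⟨hf.aestronglyMeasurable, HasFiniteIntegral.of_bounded (C := C)
    (Filter.Eventually.of_forall fun x => by simpa using h x)⟩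

theorem abs_integral_le' {X : Type*} [MeasurableSpace X] (μ : Measure X) [IsProbabilityMeasure μ]
    {f : X → ℝ} {C : ℝ} (h : ∀ x, |f x| ≤ C) : |∫ x, f x ∂μ| ≤ C := by
  have := norm_integral_le_of_norm_le_const (μ := μ) (f := f) (C := C)
    (Filter.Eventually.of_forall fun x => by simpa using h x)
  simpa [measure_univ] using this

theorem kernel_integral_meas {X Y : Type*} [MeasurableSpace X] [MeasurableSpace Y]
    {g : Y → ℝ} (hg : Measurable g) (κ : Kernel X Y) [IsSFiniteKernel κ] :
    Measurable fun x : X => ∫ y, g y ∂(κ x) :=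
  (MeasureTheory.StronglyMeasurable.integral_kernel_prod_right' (κ := κ)
    (f := fun p : X × Y => g p.2) ((hg.comp measurable_snd).stronglyMeasurable)).measurable

theorem vstar_meas_bdd [∀ t, IsMarkovKernel (P t)] [IsFiniteMeasure ν]
    (hν : ν Set.univ ≠ 0) {β : ℝ} (hβ : 0 < β) {r : ℕ → S → A → ℝ} (hr : IsBddReward r) :
    (∀ t, Measurable (Vstar T P ν β r t)) ∧
      ∃ C, 0 ≤ C ∧ ∀ t s, |Vstar T P ν β r t s| ≤ C := by
  have hν0 : 0 < (ν Set.univ).toReal := ENNReal.toReal_pos hν (measure_ne_top ν _)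
  have key : ∀ n t, T + 1 - t ≤ n →
      Measurable (Vstar T P ν β r t) ∧ ∃ C, 0 ≤ C ∧ ∀ s, |Vstar T P ν β r t s| ≤ C := by
    intro n
    induction n with
    | zero =>
      intro t ht
      have hTt : T < t := by omega
      have hz : Vstar T P ν β r t = fun _ => 0 := by
        funext s; rw [Vstar.eq_def, if_pos hTt]
      rw [hz]
      exact ⟨measurable_const, 0, le_refl 0, fun s => by simp⟩
    | succ n ih =>
      intro t ht
      by_cases hTt : T < t
      · have hz : Vstar T P ν β r t = fun _ => 0 := by
          funext s; rw [Vstar.eq_def, if_pos hTt]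
        rw [hz]
        exact ⟨measurable_const, 0, le_refl 0, fun s => by simp⟩
      · obtain ⟨hm, C, hC0, hC⟩ := ih (t + 1) (by omega)
        obtain ⟨hrm, Cr, hCr⟩ := hr t
        set M : ℝ := |Cr| + C with hM
        have hM0 : 0 ≤ M := add_nonneg (abs_nonneg _) hC0
        have hwm : Measurable (fun q : S × A => ∫ s', Vstar T P ν β r (t + 1) s' ∂(P t q)) :=
          kernel_integral_meas hm (P t)
        have hwb : ∀ q : S × A, |∫ s', Vstar T P ν β r (t + 1) s' ∂(P t q)| ≤ C :=
          fun q => abs_integral_le' _ hC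
        set f : S × A → ℝ :=
          fun q => Real.exp ((r t q.1 q.2 + ∫ s', Vstar T P ν β r (t + 1) s' ∂(P t q)) / β)
          with hf
        have hfm : Measurable f := Real.measurable_exp.comp ((hrm.add hwm).div_const β)
        have hfb : ∀ q, Real.exp (-(M / β)) ≤ f q ∧ f q ≤ Real.exp (M / β) := by
          intro q
          have habs : |r t q.1 q.2 + ∫ s', Vstar T P ν β r (t + 1) s' ∂(P t q)| ≤ M :=
            (abs_add_le _ _).trans (add_le_add ((hCr q.1 q.2).trans (le_abs_self Cr)) (hwb q))
          have h1 : |(r t q.1 q.2 + ∫ s', Vstar T P ν β r (t + 1) s' ∂(P t q)) / β| ≤ M / β := by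
            rw [abs_div, abs_of_pos hβ]
            gcongr
          obtain ⟨hl, hu⟩ := abs_le.mp h1
          exact ⟨Real.exp_le_exp.mpr hl, Real.exp_le_exp.mpr hu⟩
        have hfi : ∀ s, Integrable (fun a => f (s, a)) ν := fun s =>
          integrable_of_bdd' (hfm.comp measurable_prodMk_left)
            (fun a => by rw [abs_of_pos (Real.exp_pos _)]; exact (hfb (s, a)).2)
        have hIlow : ∀ s, (ν Set.univ).toReal * Real.exp (-(M / β)) ≤ ∫ a, f (s, a) ∂ν := by
          intro s
          have h2 := integral_mono (integrable_const (Real.exp (-(M / β)))) (hfi s)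
            (fun a => (hfb (s, a)).1)
          simpa [integral_const, smul_eq_mul, Measure.real] using h2
        have hIhigh : ∀ s, (∫ a, f (s, a) ∂ν) ≤ (ν Set.univ).toReal * Real.exp (M / β) := by
          intro s
          have h2 := integral_mono (hfi s) (integrable_const (Real.exp (M / β)))
            (fun a => (hfb (s, a)).2)
          simpa [integral_const, smul_eq_mul, Measure.real] using h2
        have hIpos : ∀ s, 0 < ∫ a, f (s, a) ∂ν :=
          fun s => lt_of_lt_of_le (by positivity) (hIlow s)
        have hIm : Measurable fun s => ∫ a, f (s, a) ∂ν := by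
          have h2 := MeasureTheory.StronglyMeasurable.integral_kernel_prod_right'
            (κ := Kernel.const S ν) (f := f) hfm.stronglyMeasurable
          simpa [Kernel.const_apply] using h2.measurable
        have hVeq : ∀ s, Vstar T P ν β r t s = β * Real.log (∫ a, f (s, a) ∂ν) := by
          intro s
          rw [Vstar.eq_def, if_neg hTt]
        have hVfun : Vstar T P ν β r t = fun s => β * Real.log (∫ a, f (s, a) ∂ν) :=
          funext hVeq
        constructor
        · rw [hVfun]
          exact measurable_const.mul (Real.measurable_log.comp hIm)
        · refine ⟨β * (|Real.log (ν Set.univ).toReal| + M / β), by positivity, fun s => ?_⟩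
          rw [hVeq s, abs_mul, abs_of_pos hβ]
          refine mul_le_mul_of_nonneg_left ?_ hβ.le
          have hup : Real.log (∫ a, f (s, a) ∂ν) ≤ Real.log (ν Set.univ).toReal + M / β := by
            have h2 := Real.log_le_log (hIpos s) (hIhigh s)
            rwa [Real.log_mul (ne_of_gt hν0) (Real.exp_ne_zero _), Real.log_exp] at h2
          have hlow : Real.log (ν Set.univ).toReal + -(M / β)
              ≤ Real.log (∫ a, f (s, a) ∂ν) := by
            have h2 := Real.log_le_log (by positivity) (hIlow s)
            rwa [Real.log_mul (ne_of_gt hν0) (Real.exp_ne_zero _), Real.log_exp] at h2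
          rw [abs_le]
          constructor
          · have h3 := neg_abs_le (Real.log (ν Set.univ).toReal); linarith
          · have h3 := le_abs_self (Real.log (ν Set.univ).toReal); linarith
  refine ⟨fun t => (key (T + 1) t (by omega)).1, ?_⟩
  choose! C hC0 hC using fun t => (key (T + 1) t (by omega)).2
  refine ⟨∑ u ∈ Finset.range (T + 2), C u, Finset.sum_nonneg fun u _ => hC0 u, fun t s => ?_⟩
  by_cases hTt : T < t ∧ ¬ t < T + 2
  · rw [Vstar.eq_def, if_pos hTt.1]
    simpa using Finset.sum_nonneg (fun u (_ : u ∈ Finset.range (T + 2)) => hC0 u)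
  · have htm : t < T + 2 := by omega
    exact (hC t s).trans (Finset.single_le_sum (fun u _ => hC0 u) (Finset.mem_range.mpr htm))

theorem polExp_sum_eq [∀ t, IsMarkovKernel (P t)]
    (pol : ℕ → Kernel S A) [∀ t, IsMarkovKernel (pol t)] (β : ℝ) (r : ℕ → S → A → ℝ)
    (hmeas : ∀ t, Measurable (Vstar T P ν β r t))
    {C : ℝ} (hbd : ∀ t s, |Vstar T P ν β r t s| ≤ C) :
    ∀ n t, T + 1 - t ≤ n → ∀ (c : ℝ) (s : S),
      polExp T P pol (fun τ => c + ∑ u ∈ Finset.Icc t T,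
          (Vstar T P ν β r u (τ u).1 - ∫ s', Vstar T P ν β r (u + 1) s' ∂(P u (τ u)))) t s
        = c + Vstar T P ν β r t s := by
  intro n
  induction n with
  | zero =>
    intro t ht c s
    have hTt : T < t := by omega
    have h1 : Finset.Icc t T = ∅ := Finset.Icc_eq_empty (by omega)
    rw [polExp.eq_def, if_pos hTt, Vstar.eq_def, if_pos hTt]
    simp [h1]
  | succ n ih =>
    intro t ht c s
    by_cases hTt : T < t
    · have h1 : Finset.Icc t T = ∅ := Finset.Icc_eq_empty (by omega)
      rw [polExp.eq_def, if_pos hTt, Vstar.eq_def, if_pos hTt]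
      simp [h1]
    · rw [polExp.eq_def, if_neg hTt]
      have key : ∀ a : A,
          (∫ s', polExp T P pol
              (fun τ => c + ∑ u ∈ Finset.Icc t T,
                (Vstar T P ν β r u (Function.update τ t (s, a) u).1
                  - ∫ s'', Vstar T P ν β r (u + 1) s'' ∂(P u (Function.update τ t (s, a) u))))
              (t + 1) s' ∂(P t (s, a)))
            = c + Vstar T P ν β r t s := by
        intro a
        have hfe : (fun τ : ℕ → S × A => c + ∑ u ∈ Finset.Icc t T,
              (Vstar T P ν β r u (Function.update τ t (s, a) u).1
                - ∫ s'', Vstar T P ν β r (u + 1) s'' ∂(P u (Function.update τ t (s, a) u))))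
            = fun τ : ℕ → S × A =>
              (c + (Vstar T P ν β r t s - ∫ s'', Vstar T P ν β r (t + 1) s'' ∂(P t (s, a))))
              + ∑ u ∈ Finset.Icc (t + 1) T,
                (Vstar T P ν β r u (τ u).1
                  - ∫ s'', Vstar T P ν β r (u + 1) s'' ∂(P u (τ u))) := by
          funext τ
          rw [Finset.Icc_eq_cons_Ioc (by omega : t ≤ T), Finset.sum_cons, ← Finset.Icc_add_one_left_eq_Ioc]
          have h2 : Function.update τ t (s, a) t = (s, a) := Function.update_self _ _ _
          have h3 : ∑ u ∈ Finset.Icc (t + 1) T,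
                (Vstar T P ν β r u (Function.update τ t (s, a) u).1
                  - ∫ s'', Vstar T P ν β r (u + 1) s'' ∂(P u (Function.update τ t (s, a) u)))
              = ∑ u ∈ Finset.Icc (t + 1) T,
                (Vstar T P ν β r u (τ u).1
                  - ∫ s'', Vstar T P ν β r (u + 1) s'' ∂(P u (τ u))) := by
            refine Finset.sum_congr rfl fun u hu => ?_
            have hut : u ≠ t := by
              rw [Finset.mem_Icc] at hu; omega
            rw [Function.update_of_ne hut]
          rw [h2, h3]
          ring
        rw [hfe]
        trans (∫ s', ((c + (Vstar T P ν β r t s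
            - ∫ s'', Vstar T P ν β r (t + 1) s'' ∂(P t (s, a))))
            + Vstar T P ν β r (t + 1) s') ∂(P t (s, a)))
        · exact integral_congr_ae (Filter.Eventually.of_forall fun s' =>
            ih (t + 1) (by omega) _ s')
        · rw [integral_add (integrable_const _)
            (integrable_of_bdd' (hmeas (t + 1)) (fun s' => hbd (t + 1) s')), integral_const]
          simp only [probReal_univ, one_smul]
          ring
      trans (∫ a, (c + Vstar T P ν β r t s) ∂(pol t s))
      · exact integral_congr_ae (Filter.Eventually.of_forall key)
      · rw [integral_const]
        simp [measure_univ]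

end AuxProofs

end IRL

open MeasureTheory ProbabilityTheory Real
open scoped ENNReal

/-- **Population-level equivalence of MLE and Min-Max-IRL** (Theorem 1, part 1, population
level). For any expert Markov policy `π^E` with trajectory law `P^{π^E}`, and every bounded
measurable reward `r`, `L^MLE(π*_r) = β⁻¹ L^IRL(r)`; in particular, over any reward class `R`
the two problems have the same minimizers under `r ↦ π*_r`. -/
theorem mle_minmax_irl_population_equivalence
    {S A : Type*} [MeasurableSpace S] [MeasurableSpace A] [Nonempty S] [Nonempty A]
    (T : ℕ) (hT : 1 ≤ T)
    (P0 : Measure S) [IsProbabilityMeasure P0]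
    (P : ℕ → Kernel (S × A) S) [∀ t, IsMarkovKernel (P t)]
    (ν : Measure A) [IsFiniteMeasure ν] (hν : ν Set.univ ≠ 0)
    (β : ℝ) (hβ : 0 < β)
    -- the expert: an arbitrary Markov policy, with trajectory law `PE`
    (piE : ℕ → Kernel S A) [∀ t, IsMarkovKernel (piE t)]
    (PE : Measure (ℕ → S × A)) (hPE : IRL.IsTrajLaw T P P0 piE PE) :
    -- population MLE risk of `π*_r` equals `β⁻¹` times the population Min-Max-IRL risk of `r`
    (∀ r : ℕ → S → A → ℝ, IRL.IsBddReward r →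
      ∫ τ, (- ∑ t ∈ Finset.Icc 1 T, Real.log (IRL.piStar T P ν β r t (τ t).1 (τ t).2)) ∂PE
        = β⁻¹ * (IRL.Jstar T P ν P0 β r
            - ∫ τ, (∑ t ∈ Finset.Icc 1 T, r t (τ t).1 (τ t).2) ∂PE)) ∧
    -- in particular, over any reward class the two problems have the same minimizers
    (∀ R : Set (ℕ → S → A → ℝ), (∀ r ∈ R, IRL.IsBddReward r) → ∀ r₀ ∈ R,
      ((∀ r ∈ R,
          IRL.Jstar T P ν P0 β r₀ - ∫ τ, (∑ t ∈ Finset.Icc 1 T, r₀ t (τ t).1 (τ t).2) ∂PE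
            ≤ IRL.Jstar T P ν P0 β r - ∫ τ, (∑ t ∈ Finset.Icc 1 T, r t (τ t).1 (τ t).2) ∂PE)
        ↔ (∀ r ∈ R,
          ∫ τ, (- ∑ t ∈ Finset.Icc 1 T,
              Real.log (IRL.piStar T P ν β r₀ t (τ t).1 (τ t).2)) ∂PE
            ≤ ∫ τ, (- ∑ t ∈ Finset.Icc 1 T,
              Real.log (IRL.piStar T P ν β r t (τ t).1 (τ t).2)) ∂PE))) := by
  haveI := hPE.1
  have part1 : ∀ r : ℕ → S → A → ℝ, IRL.IsBddReward r →
      ∫ τ, (- ∑ t ∈ Finset.Icc 1 T, Real.log (IRL.piStar T P ν β r t (τ t).1 (τ t).2)) ∂PE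
        = β⁻¹ * (IRL.Jstar T P ν P0 β r
            - ∫ τ, (∑ t ∈ Finset.Icc 1 T, r t (τ t).1 (τ t).2) ∂PE) := by
    intro r hr
    obtain ⟨hVm, CV, hCV0, hCV⟩ := IRL.vstar_meas_bdd T P ν hν hβ hr
    choose! Cr hCr using fun t => (hr t).2
    set g1 : (ℕ → S × A) → ℝ := fun τ => ∑ u ∈ Finset.Icc 1 T,
        (IRL.Vstar T P ν β r u (τ u).1
          - ∫ s', IRL.Vstar T P ν β r (u + 1) s' ∂(P u (τ u))) with hg1def
    set Rf : (ℕ → S × A) → ℝ :=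
        fun τ => ∑ t ∈ Finset.Icc 1 T, r t (τ t).1 (τ t).2 with hRdef
    have hWm : ∀ u, Measurable
        (fun q : S × A => ∫ s', IRL.Vstar T P ν β r (u + 1) s' ∂(P u q)) :=
      fun u => IRL.kernel_integral_meas (hVm (u + 1)) (P u)
    have hg1m : Measurable g1 := by
      rw [hg1def]
      refine Finset.measurable_sum _ fun u _ => ?_
      exact ((hVm u).comp (measurable_fst.comp (measurable_pi_apply u))).sub
        ((hWm u).comp (measurable_pi_apply u))
    have hg1b : ∀ τ, |g1 τ| ≤ ∑ u ∈ Finset.Icc 1 T, (CV + CV) := by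
      intro τ
      rw [hg1def]
      refine (Finset.abs_sum_le_sum_abs _ _).trans (Finset.sum_le_sum fun u _ => ?_)
      exact (abs_sub _ _).trans
        (add_le_add (hCV u _) (IRL.abs_integral_le' _ (fun s' => hCV (u + 1) s')))
    have hRm : Measurable Rf := by
      rw [hRdef]
      refine Finset.measurable_sum _ fun u _ => ?_
      exact (hr u).1.comp (measurable_pi_apply u)
    have hRb : ∀ τ, |Rf τ| ≤ ∑ u ∈ Finset.Icc 1 T, |Cr u| := by
      intro τ
      rw [hRdef]
      refine (Finset.abs_sum_le_sum_abs _ _).trans (Finset.sum_le_sum fun u _ => ?_)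
      exact (hCr u _ _).trans (le_abs_self _)
    have hg1i : Integrable g1 PE := IRL.integrable_of_bdd' hg1m hg1b
    have hRi : Integrable Rf PE := IRL.integrable_of_bdd' hRm hRb
    have hpoint : ∀ τ : ℕ → S × A,
        (- ∑ t ∈ Finset.Icc 1 T, Real.log (IRL.piStar T P ν β r t (τ t).1 (τ t).2))
          = β⁻¹ * (g1 τ - Rf τ) := by
      intro τ
      simp only [hg1def, hRdef, IRL.piStar, Real.log_exp]
      rw [← Finset.sum_sub_distrib, Finset.mul_sum, ← Finset.sum_neg_distrib]
      refine Finset.sum_congr rfl fun u hu => ?_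
      simp only [IRL.Qstar, Prod.mk.eta]
      ring
    have hg1PE : ∫ τ, g1 τ ∂PE = IRL.Jstar T P ν P0 β r := by
      rw [hPE.2 g1 hg1m ⟨_, hg1b⟩]
      show ∫ s, IRL.polExp T P piE g1 1 s ∂P0 = ∫ s, IRL.Vstar T P ν β r 1 s ∂P0
      refine integral_congr_ae (Filter.Eventually.of_forall fun s => ?_)
      have he : g1 = (fun τ => (0 : ℝ) + ∑ u ∈ Finset.Icc 1 T,
          (IRL.Vstar T P ν β r u (τ u).1
            - ∫ s', IRL.Vstar T P ν β r (u + 1) s' ∂(P u (τ u)))) := by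
        rw [hg1def]
        funext τ
        rw [zero_add]
      rw [he, IRL.polExp_sum_eq T P ν piE β r hVm hCV (T + 1) 1 (by omega) 0 s, zero_add]
    calc ∫ τ, (- ∑ t ∈ Finset.Icc 1 T, Real.log (IRL.piStar T P ν β r t (τ t).1 (τ t).2)) ∂PE
        = ∫ τ, β⁻¹ * (g1 τ - Rf τ) ∂PE :=
          integral_congr_ae (Filter.Eventually.of_forall hpoint)
      _ = β⁻¹ * ∫ τ, (g1 τ - Rf τ) ∂PE := integral_const_mul _ _
      _ = β⁻¹ * (∫ τ, g1 τ ∂PE - ∫ τ, Rf τ ∂PE) := by rw [integral_sub hg1i hRi]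
      _ = β⁻¹ * (IRL.Jstar T P ν P0 β r - ∫ τ, Rf τ ∂PE) := by rw [hg1PE]
  refine ⟨part1, fun R hR r₀ hr₀ => ?_⟩
  constructor
  · intro h r hrR
    rw [part1 r₀ (hR r₀ hr₀), part1 r (hR r hrR)]
    exact mul_le_mul_of_nonneg_left (h r hrR) (inv_nonneg.mpr hβ.le)
  · intro h r hrR
    have h2 := h r hrR
    rw [part1 r₀ (hR r₀ hr₀), part1 r (hR r hrR)] at h2
    exact le_of_mul_le_mul_left h2 (inv_pos.mpr hβ)
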